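/- The quotient ring ℤ[X]/(X² − 2X, X + 2, 2X) is isomorphic, as a ring, to ℤ/4ℤ, via the isomorphism sending the class of X to 2 (equivalently, to −2) in ℤ/4ℤ. -/
import Mathlib


open Polynomial

noncomputable section

/-- The quotient of the Burnside ring `A(C₂) = ℤ[X]/(X² - 2X)` by the Tambara ideal
generated by `2 ∈ A(C₂/e)`, i.e. `ℤ[X]/(X² - 2X, X + 2, 2X)`. -/
def relQ : Ideal (Polynomial ℤ) :=
  Ideal.span {(X : Polynomial ℤ) ^ 2 - 2 * X, X + 2, 2 * X}

lemma xp2_mem : (X + 2 : Polynomial ℤ) ∈ relQ :=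
  Ideal.subset_span (by simp)

lemma twoX_mem : (2 * X : Polynomial ℤ) ∈ relQ :=
  Ideal.subset_span (by simp)

lemma four_mem : (4 : Polynomial ℤ) ∈ relQ := by
  have h : (4 : Polynomial ℤ) = 2 * (X + 2) - 2 * X := by ring
  rw [h]
  exact sub_mem (Ideal.mul_mem_left _ _ xp2_mem) twoX_mem

/-- evaluation at -2 -/
def evm : Polynomial ℤ →+* ZMod 4 :=
  eval₂RingHom (Int.castRingHom (ZMod 4)) (-2)

lemma relQ_le_ker : relQ ≤ RingHom.ker evm := by
  rw [relQ, Ideal.span_le]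
  rintro p hp
  simp only [Set.mem_insert_iff, Set.mem_singleton_iff] at hp
  rcases hp with rfl | rfl | rfl <;>
    simp [evm, RingHom.mem_ker] <;> decide

lemma ker_le_relQ : RingHom.ker evm ≤ relQ := by
  intro p hp
  have h1 : X - C (-2 : ℤ) ∣ p - C (p.eval (-2)) := X_sub_C_dvd_sub_C_eval
  obtain ⟨q, hq⟩ := h1
  have hx : (X - C (-2 : ℤ)) = X + 2 := by
    simp
  have hev : ((p.eval (-2) : ℤ) : ZMod 4) = 0 := by
    have h0 : evm p = 0 := hp
    rw [evm, coe_eval₂RingHom, eval₂_eq_eval_map] at h0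
    have hc : ((-2 : ℤ) : ZMod 4) = -2 := by push_cast; ring
    rw [← hc, eval_intCast_map] at h0
    exact h0
  obtain ⟨k, hk⟩ := (ZMod.intCast_zmod_eq_zero_iff_dvd _ _).mp hev
  have hk' : p.eval (-2) = 4 * k := by exact_mod_cast hk
  have hp' : p = (X + 2) * q + C (4 * k) := by
    rw [← hx, ← hk']
    linear_combination hq
  rw [hp']
  refine add_mem (Ideal.mul_mem_right _ _ xp2_mem) ?_
  have : C (4 * k) = 4 * C k := by simp [C_mul]
  rw [this]
  exact Ideal.mul_mem_right _ _ four_mem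

/-- `ℤ[X]/(X² - 2X, X + 2, 2X)` is isomorphic to `ℤ/4ℤ` via `X ↦ 2` (equivalently,
`X ↦ -2`). -/
theorem stmt12 :
    ∃ e : (Polynomial ℤ ⧸ relQ) ≃+* ZMod 4,
      e (Ideal.Quotient.mk relQ X) = 2 ∧ e (Ideal.Quotient.mk relQ X) = -2 := by
  have hker : ∀ p ∈ relQ, evm p = 0 := fun p hp => relQ_le_ker hp
  let φ : Polynomial ℤ ⧸ relQ →+* ZMod 4 := Ideal.Quotient.lift relQ evm hker
  have hinj : Function.Injective φ := by
    exact RingHom.lift_injective_of_ker_le_ideal relQ hker ker_le_relQ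
  have hsurj : Function.Surjective φ := by
    intro z
    refine ⟨Ideal.Quotient.mk relQ (C (z.val : ℤ)), ?_⟩
    have : φ (Ideal.Quotient.mk relQ (C (z.val : ℤ))) = ((z.val : ℤ) : ZMod 4) := by
      simp [φ, evm]
    rw [this]
    push_cast
    exact ZMod.natCast_rightInverse z
  have hX : φ (Ideal.Quotient.mk relQ X) = -2 := by
    simp [φ, evm]
  refine ⟨RingEquiv.ofBijective φ ⟨hinj, hsurj⟩, ?_, hX⟩
  rw [show (RingEquiv.ofBijective φ ⟨hinj, hsurj⟩) (Ideal.Quotient.mk relQ X) = φ (Ideal.Quotient.mk relQ X) from rfl, hX]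
  decide
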